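/- Let K be a field of characteristic zero. Let φ = σ(1, α, f) and ψ = σ(1, β, g) be elementary automorphisms of P_n = K[x_1,…,x_n] with f ≠ 0 and g ≠ 0 not involving x_1. If α ≠ 1 or β ≠ 1, then the subgroup ⟨φ, ψ⟩ is metabelian, i.e. its commutator subgroup is abelian (its second derived subgroup is trivial). -/

import Mathlib

open MvPolynomial

noncomputable section

/-- The group of `K`-algebra automorphisms of the polynomial algebra `P_n = K[x_1,…,x_n]`. -/
abbrev PAut (K : Type*) [Field K] (n : ℕ) :=
  MvPolynomial (Fin n) K ≃ₐ[K] MvPolynomial (Fin n) K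

/-- **Statement 13 (Proposition 2.1).** Let `φ = σ(1, α, f)` and `ψ = σ(1, β, g)` be
elementary automorphisms of `P_n` with `f ≠ 0`, `g ≠ 0` not involving `x_1`.  If
`α ≠ 1` or `β ≠ 1`, then `⟨φ, ψ⟩` is metabelian: its second derived subgroup is
trivial. -/
theorem bardakov_proposition2_part1 (K : Type*) [Field K] [CharZero K]
    (n : ℕ) (hn : 2 ≤ n)
    (α β : K) (hα : α ≠ 0) (hβ : β ≠ 0) (f g : MvPolynomial (Fin n) K)
    (hf0 : f ≠ 0) (hg0 : g ≠ 0)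
    (hf : f ∈ Algebra.adjoin K (MvPolynomial.X '' {j : Fin n | j ≠ ⟨0, by omega⟩}))
    (hg : g ∈ Algebra.adjoin K (MvPolynomial.X '' {j : Fin n | j ≠ ⟨0, by omega⟩}))
    (φ ψ : PAut K n)
    (hφ1 : φ (X ⟨0, by omega⟩) = C α * X ⟨0, by omega⟩ + f)
    (hφ2 : ∀ j : Fin n, j ≠ ⟨0, by omega⟩ → φ (X j) = X j)
    (hψ1 : ψ (X ⟨0, by omega⟩) = C β * X ⟨0, by omega⟩ + g)
    (hψ2 : ∀ j : Fin n, j ≠ ⟨0, by omega⟩ → ψ (X j) = X j)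
    (hαβ : α ≠ 1 ∨ β ≠ 1) :
    derivedSeries (Subgroup.closure {φ, ψ}) 2 = ⊥ := by
  have hn0 : 0 < n := by omega
  set i0 : Fin n := ⟨0, hn0⟩ with hi0
  set A : Subalgebra K (MvPolynomial (Fin n) K) :=
    Algebra.adjoin K (X '' {j : Fin n | j ≠ i0}) with hA
  -- any automorphism fixing the other variables fixes everything in `A`
  have fixA : ∀ (θ : PAut K n), (∀ j, j ≠ i0 → θ (X j) = X j) →
      ∀ h ∈ A, θ h = h := by
    intro θ hθ h hh
    refine Algebra.adjoin_induction ?_ ?_ ?_ ?_ hh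
    · rintro x ⟨j, hj, rfl⟩
      exact hθ j hj
    · intro r
      exact θ.commutes r
    · intro x y _ _ hx hy
      rw [map_add, hx, hy]
    · intro x y _ _ hx hy
      rw [map_mul, hx, hy]
  -- the key predicate: `θ` is an "affine" automorphism with multiplier `a`
  have hC : ∀ (θ : PAut K n) (r : K), θ (C r) = C r := fun θ r => by
    simpa [MvPolynomial.algebraMap_eq] using θ.commutes r
  set P : K → PAut K n → Prop := fun a θ =>
    (∀ j, j ≠ i0 → θ (X j) = X j) ∧ ∃ h ∈ A, θ (X i0) = C a * X i0 + h with hP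
  have Pone : P 1 1 := by
    refine ⟨fun j _ => rfl, 0, A.zero_mem, ?_⟩
    simp
  have Pmul : ∀ a b (θ θ' : PAut K n), P a θ → P b θ' → P (a * b) (θ * θ') := by
    rintro a b θ θ' ⟨hθf, h, hhA, hh⟩ ⟨hθ'f, k, hkA, hk⟩
    refine ⟨fun j hj => by rw [AlgEquiv.mul_apply, hθ'f j hj, hθf j hj], ?_⟩
    refine ⟨C b * h + k, A.add_mem (A.mul_mem (A.algebraMap_mem b) hhA) hkA, ?_⟩
    rw [AlgEquiv.mul_apply, hk, map_add, map_mul, fixA θ hθf k hkA, hC θ b, hh,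
      C_mul]
    ring
  have Pinv : ∀ a (θ : PAut K n), a ≠ 0 → P a θ → P a⁻¹ θ⁻¹ := by
    rintro a θ ha ⟨hθf, h, hhA, hh⟩
    have hfix' : ∀ j, j ≠ i0 → θ⁻¹ (X j) = X j := by
      intro j hj
      have : θ (θ⁻¹ (X j)) = θ (X j) := by
        rw [hθf j hj]
        exact θ.apply_symm_apply (X j)
      exact θ.injective this
    refine ⟨hfix', -(C a⁻¹ * h), A.neg_mem (A.mul_mem (A.algebraMap_mem _) hhA), ?_⟩
    have key : θ (C a⁻¹ * X i0 + -(C a⁻¹ * h)) = X i0 := by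
      rw [map_add, map_neg, map_mul, map_mul, hC θ a⁻¹, hh, fixA θ hθf h hhA]
      have hCa : C a⁻¹ * C a = (1 : MvPolynomial (Fin n) K) := by
        rw [← C_mul, inv_mul_cancel₀ ha, C_1]
      linear_combination (X i0 : MvPolynomial (Fin n) K) * hCa
    have := congrArg θ.symm key
    rw [θ.symm_apply_apply] at this
    rw [show (θ⁻¹ : PAut K n) = θ.symm from rfl, ← this]
  -- every element of the closure is affine with some nonzero multiplier
  have Pclos : ∀ θ ∈ Subgroup.closure ({φ, ψ} : Set (PAut K n)),
      ∃ a, a ≠ 0 ∧ P a θ := by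
    intro θ hθ
    refine Subgroup.closure_induction ?_ ⟨1, one_ne_zero, Pone⟩ ?_ ?_ hθ
    · rintro x (rfl | rfl)
      · exact ⟨α, hα, hφ2, f, hf, hφ1⟩
      · exact ⟨β, hβ, hψ2, g, hg, hψ1⟩
    · rintro x y _ _ ⟨a, ha, hx⟩ ⟨b, hb, hy⟩
      exact ⟨a * b, mul_ne_zero ha hb, Pmul a b x y hx hy⟩
    · rintro x _ ⟨a, ha, hx⟩
      exact ⟨a⁻¹, inv_ne_zero ha, Pinv a x ha hx⟩
  set G := Subgroup.closure ({φ, ψ} : Set (PAut K n)) with hG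
  -- every element of the derived subgroup of `G` satisfies `P 1`
  have D1 : ∀ x : G, x ∈ derivedSeries G 1 → P 1 (x : PAut K n) := by
    intro x hx
    rw [derivedSeries_succ, derivedSeries_zero, Subgroup.commutator_def] at hx
    refine Subgroup.closure_induction ?_ (by rw [OneMemClass.coe_one]; exact Pone) ?_ ?_ hx
    · rintro z ⟨g₁, -, g₂, -, rfl⟩
      obtain ⟨a, ha, hPa⟩ := Pclos (g₁ : PAut K n) g₁.2
      obtain ⟨b, hb, hPb⟩ := Pclos (g₂ : PAut K n) g₂.2
      have : ((g₁ * g₂ * g₁⁻¹ * g₂⁻¹ : G) : PAut K n)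
          = (g₁ : PAut K n) * g₂ * (g₁ : PAut K n)⁻¹ * (g₂ : PAut K n)⁻¹ := rfl
      show P 1 ((g₁ : PAut K n) * g₂ * (g₁ : PAut K n)⁻¹ * (g₂ : PAut K n)⁻¹)
      have h1 : P (a * b * a⁻¹ * b⁻¹) ((g₁ : PAut K n) * g₂ * (g₁ : PAut K n)⁻¹
          * (g₂ : PAut K n)⁻¹) :=
        Pmul _ _ _ _ (Pmul _ _ _ _ (Pmul _ _ _ _ hPa hPb) (Pinv _ _ ha hPa))
          (Pinv _ _ hb hPb)
      have : a * b * a⁻¹ * b⁻¹ = 1 := by field_simp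
      rwa [this] at h1
    · intro x y _ _ hx hy
      have := Pmul 1 1 _ _ hx hy
      rwa [one_mul] at this
    · intro x _ hx
      have := Pinv 1 _ one_ne_zero hx
      rwa [inv_one] at this
  -- translations commute
  have comm : ∀ θ θ' : PAut K n, P 1 θ → P 1 θ' → θ * θ' = θ' * θ := by
    rintro θ θ' ⟨hθf, h, hhA, hh⟩ ⟨hθ'f, k, hkA, hk⟩
    rw [map_one, one_mul] at hh hk
    have : (θ * θ').toAlgHom = (θ' * θ).toAlgHom := by
      apply MvPolynomial.algHom_ext
      intro j
      by_cases hj : j = i0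
      · subst hj
        change (θ * θ') (X _) = (θ' * θ) (X _)
        simp only [AlgEquiv.mul_apply]
        rw [hk, map_add, hh, fixA θ hθf k hkA, map_add, hk, fixA θ' hθ'f h hhA]
        ring
      · change (θ * θ') (X _) = (θ' * θ) (X _)
        simp only [AlgEquiv.mul_apply]
        simp only [hθ'f j hj, hθf j hj]
    exact AlgEquiv.ext fun p => by simpa using DFunLike.congr_fun this p
  -- conclude
  show derivedSeries G 2 = ⊥
  rw [show (2 : ℕ) = 1 + 1 from rfl, derivedSeries_succ, eq_bot_iff]
  rw [Subgroup.commutator_le]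
  intro g₁ h₁ g₂ h₂
  rw [Subgroup.mem_bot, commutatorElement_eq_one_iff_mul_comm]
  exact Subtype.ext (comm _ _ (D1 g₁ h₁) (D1 g₂ h₂))
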